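/- Let ε ∈ ℝ and k₂ > 0. On any open interval I containing 0 on which the expression 1 + ε( s√(1 + k₂ s²) + arcsinh(√(k₂) s)/√(k₂) ) is positive, the function φ(s) := √( 1 + ε( s√(1 + k₂ s²) + arcsinh(√(k₂) s)/√(k₂) ) ) satisfies equation (E) with parameters (k₁, k₂, k₃) = (0, k₂, 0), i.e. s k₂ (φφ' − s φ'² − s φφ'') − (φ'² + φφ'') = 0 on I; moreover φ(0) = 1 and φ'(0) = ε. -/

import Mathlib

open Real

private lemma hg_deriv (ε k₂ : ℝ) (hk₂ : 0 < k₂) (s : ℝ) :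
    HasDerivAt (fun t => 1 + ε * (t * Real.sqrt (1 + k₂ * t ^ 2) +
      Real.arsinh (Real.sqrt k₂ * t) / Real.sqrt k₂))
      (2 * ε * Real.sqrt (1 + k₂ * s ^ 2)) s := by
  have hXpos : 0 < 1 + k₂ * s ^ 2 := by positivity
  have hA : Real.sqrt (1 + k₂ * s ^ 2) ^ 2 = 1 + k₂ * s ^ 2 := Real.sq_sqrt hXpos.le
  have hApos : 0 < Real.sqrt (1 + k₂ * s ^ 2) := Real.sqrt_pos.2 hXpos
  have hk : (0:ℝ) < Real.sqrt k₂ := Real.sqrt_pos.2 hk₂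
  have hX : HasDerivAt (fun t : ℝ => 1 + k₂ * t ^ 2) (k₂ * (2 * s)) s := by
    simpa using ((hasDerivAt_pow 2 s).const_mul k₂).const_add 1
  have hsX : HasDerivAt (fun t => Real.sqrt (1 + k₂ * t ^ 2))
      (k₂ * (2 * s) / (2 * Real.sqrt (1 + k₂ * s ^ 2))) s := hX.sqrt hXpos.ne'
  have h1 : HasDerivAt (fun t => t * Real.sqrt (1 + k₂ * t ^ 2))
      (1 * Real.sqrt (1 + k₂ * s ^ 2) +
        s * (k₂ * (2 * s) / (2 * Real.sqrt (1 + k₂ * s ^ 2)))) s :=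
    (hasDerivAt_id s).mul hsX
  have hlin : HasDerivAt (fun t : ℝ => Real.sqrt k₂ * t) (Real.sqrt k₂ * 1) s :=
    (hasDerivAt_id s).const_mul (Real.sqrt k₂)
  have h2 : HasDerivAt (fun t => Real.arsinh (Real.sqrt k₂ * t))
      ((Real.sqrt (1 + (Real.sqrt k₂ * s) ^ 2))⁻¹ * (Real.sqrt k₂ * 1)) s :=
    (Real.hasDerivAt_arsinh _).comp s hlin
  have hsq : (Real.sqrt k₂ * s) ^ 2 = k₂ * s ^ 2 := by
    rw [mul_pow, Real.sq_sqrt hk₂.le]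
  rw [hsq] at h2
  have := ((h1.add (h2.div_const (Real.sqrt k₂))).const_mul ε).const_add 1
  refine this.congr_deriv ?_
  field_simp
  ring_nf
  linear_combination (-ε) * hA

private lemma hphi_deriv (ε k₂ : ℝ) (hk₂ : 0 < k₂) (s : ℝ)
    (hgpos : 0 < 1 + ε * (s * Real.sqrt (1 + k₂ * s ^ 2) +
      Real.arsinh (Real.sqrt k₂ * s) / Real.sqrt k₂)) :
    HasDerivAt (fun t => Real.sqrt (1 + ε * (t * Real.sqrt (1 + k₂ * t ^ 2) +
        Real.arsinh (Real.sqrt k₂ * t) / Real.sqrt k₂)))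
      (ε * Real.sqrt (1 + k₂ * s ^ 2) /
        Real.sqrt (1 + ε * (s * Real.sqrt (1 + k₂ * s ^ 2) +
          Real.arsinh (Real.sqrt k₂ * s) / Real.sqrt k₂))) s := by
  have hBpos : 0 < Real.sqrt (1 + ε * (s * Real.sqrt (1 + k₂ * s ^ 2) +
      Real.arsinh (Real.sqrt k₂ * s) / Real.sqrt k₂)) := Real.sqrt_pos.2 hgpos
  have := (hg_deriv ε k₂ hk₂ s).sqrt hgpos.ne'
  convert this using 1
  field_simp

/-- Equation (E) with parameters `k₁ k₂ k₃` for a real function `φ` at the point `s`: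
`s(k₂ − k₃ s²)(φφ' − s φ'² − s φφ'') − (φ'² + φφ'') + k₁ φ(φ − s φ') = 0`. -/
def eqE (k₁ k₂ k₃ : ℝ) (φ : ℝ → ℝ) (s : ℝ) : Prop :=
  s * (k₂ - k₃ * s ^ 2) *
      (φ s * deriv φ s - s * (deriv φ s) ^ 2 - s * φ s * deriv (deriv φ) s) -
    ((deriv φ s) ^ 2 + φ s * deriv (deriv φ) s) +
    k₁ * φ s * (φ s - s * deriv φ s) = 0

theorem stmt14 (ε k₂ : ℝ) (hk₂ : 0 < k₂) (a b : ℝ) (ha : a < 0) (hb : 0 < b)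
    (hpos : ∀ s ∈ Set.Ioo a b,
      0 < 1 + ε * (s * Real.sqrt (1 + k₂ * s ^ 2) +
        Real.arsinh (Real.sqrt k₂ * s) / Real.sqrt k₂)) :
    (∀ s ∈ Set.Ioo a b,
      eqE 0 k₂ 0
        (fun t => Real.sqrt (1 + ε * (t * Real.sqrt (1 + k₂ * t ^ 2) +
          Real.arsinh (Real.sqrt k₂ * t) / Real.sqrt k₂))) s) ∧
    (fun t => Real.sqrt (1 + ε * (t * Real.sqrt (1 + k₂ * t ^ 2) +
      Real.arsinh (Real.sqrt k₂ * t) / Real.sqrt k₂))) 0 = 1 ∧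
    deriv (fun t => Real.sqrt (1 + ε * (t * Real.sqrt (1 + k₂ * t ^ 2) +
      Real.arsinh (Real.sqrt k₂ * t) / Real.sqrt k₂))) 0 = ε := by
  set φ : ℝ → ℝ := fun t => Real.sqrt (1 + ε * (t * Real.sqrt (1 + k₂ * t ^ 2) +
      Real.arsinh (Real.sqrt k₂ * t) / Real.sqrt k₂)) with hφdef
  set F : ℝ → ℝ := fun t => ε * Real.sqrt (1 + k₂ * t ^ 2) /
      Real.sqrt (1 + ε * (t * Real.sqrt (1 + k₂ * t ^ 2) +
        Real.arsinh (Real.sqrt k₂ * t) / Real.sqrt k₂)) with hFdef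
  have h0mem : (0:ℝ) ∈ Set.Ioo a b := ⟨ha, hb⟩
  have hφ0 : φ 0 = 1 := by
    simp [hφdef, Real.arsinh_zero]
  have hderiv : ∀ s ∈ Set.Ioo a b, deriv φ s = F s := fun s hs =>
    (hphi_deriv ε k₂ hk₂ s (hpos s hs)).deriv
  have hd0 : deriv φ 0 = ε := by
    rw [hderiv 0 h0mem, hFdef]
    simp [Real.arsinh_zero]
  refine ⟨?_, hφ0, hd0⟩
  intro s hs
  have hgpos := hpos s hs
  have hXpos : 0 < 1 + k₂ * s ^ 2 := by positivity
  set A := Real.sqrt (1 + k₂ * s ^ 2) with hAdef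
  set B := Real.sqrt (1 + ε * (s * A + Real.arsinh (Real.sqrt k₂ * s) / Real.sqrt k₂))
    with hBdef
  have hApos : 0 < A := Real.sqrt_pos.2 hXpos
  have hA : A ^ 2 = 1 + k₂ * s ^ 2 := Real.sq_sqrt hXpos.le
  have hBpos : 0 < B := Real.sqrt_pos.2 hgpos
  -- derivative of F at s
  have hnum : HasDerivAt (fun t => ε * Real.sqrt (1 + k₂ * t ^ 2))
      (ε * (k₂ * (2 * s) / (2 * A))) s := by
    have hX : HasDerivAt (fun t : ℝ => 1 + k₂ * t ^ 2) (k₂ * (2 * s)) s := by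
      simpa using ((hasDerivAt_pow 2 s).const_mul k₂).const_add 1
    exact (hX.sqrt hXpos.ne').const_mul ε
  have hden : HasDerivAt (fun t => Real.sqrt (1 + ε * (t * Real.sqrt (1 + k₂ * t ^ 2) +
      Real.arsinh (Real.sqrt k₂ * t) / Real.sqrt k₂))) (ε * A / B) s :=
    hphi_deriv ε k₂ hk₂ s hgpos
  have hF : HasDerivAt F
      ((ε * (k₂ * (2 * s) / (2 * A)) * B - ε * A * (ε * A / B)) / B ^ 2) s :=
    hnum.div hden hBpos.ne'
  -- deriv φ = F near s
  have hev : deriv φ =ᶠ[nhds s] F := by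
    filter_upwards [isOpen_Ioo.mem_nhds hs] with t ht
    exact hderiv t ht
  have hdd : deriv (deriv φ) s =
      (ε * (k₂ * (2 * s) / (2 * A)) * B - ε * A * (ε * A / B)) / B ^ 2 := by
    rw [hev.deriv_eq]
    exact hF.deriv
  have hds : deriv φ s = ε * A / B := hderiv s hs
  have hφs : φ s = B := rfl
  unfold eqE
  rw [hds, hdd, hφs]
  field_simp
  ring_nf
  linear_combination ε * s * k₂ * B ^ 2 * hA
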